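/- With t the formal power series inverse of x = (27/4) t (1-t)^2 (zero constant term), one has t = \sum_{k \ge 1} (1/k) * binom(3k-2, k-1) * 2^{2k} / 3^{3k} * x^k as formal power series in x. -/

import Mathlib

open PowerSeries Nat

lemma binom_step (m : ℕ) :
    2*((m:ℚ)+1)*(2*m+3) * (Nat.choose (3*m+4) (m+1) : ℚ)
      = 3*(3*m+2)*(3*m+4) * (Nat.choose (3*m+1) m : ℚ) := by
  have e1 : ((3*m+4).choose (m+1) : ℚ)
      = ((3*m+4)! : ℚ) / (((m+1)! : ℚ) * ((2*m+3)! : ℚ)) := by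
    rw [Nat.cast_choose ℚ (by omega : m+1 ≤ 3*m+4), show 3*m+4 - (m+1) = 2*m+3 by omega]
  have e2 : ((3*m+1).choose m : ℚ) = ((3*m+1)! : ℚ) / ((m ! : ℚ) * ((2*m+1)! : ℚ)) := by
    rw [Nat.cast_choose ℚ (by omega : m ≤ 3*m+1), show 3*m+1 - m = 2*m+1 by omega]
  have f1 : (((3*m+4)! : ℕ) : ℚ) = (3*m+4)*((3*m+3)*((3*m+2)*((3*m+1)! : ℚ))) := by
    rw [show 3*m+4 = (3*m+3)+1 by ring, Nat.factorial_succ,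
      show 3*m+3 = (3*m+2)+1 by ring, Nat.factorial_succ,
      show 3*m+2 = (3*m+1)+1 by ring, Nat.factorial_succ]
    push_cast; ring
  have f2 : (((2*m+3)! : ℕ) : ℚ) = (2*m+3)*((2*m+2)*((2*m+1)! : ℚ)) := by
    rw [show 2*m+3 = (2*m+2)+1 by ring, Nat.factorial_succ,
      show 2*m+2 = (2*m+1)+1 by ring, Nat.factorial_succ]
    push_cast; ring
  have f3 : (((m+1)! : ℕ) : ℚ) = ((m:ℚ)+1) * (m ! : ℚ) := by
    rw [Nat.factorial_succ]; push_cast; ring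
  have h1 : ((m ! : ℕ) : ℚ) ≠ 0 := Nat.cast_ne_zero.2 (Nat.factorial_ne_zero m)
  have h2 : (((2*m+1)! : ℕ) : ℚ) ≠ 0 := Nat.cast_ne_zero.2 (Nat.factorial_ne_zero _)
  have h3 : ((m:ℚ)+1) ≠ 0 := by positivity
  have h4 : (2*(m:ℚ)+3) ≠ 0 := by positivity
  have h5 : (2*(m:ℚ)+2) ≠ 0 := by positivity
  rw [e1, e2, f1, f2, f3]
  field_simp


/-- If `t ∈ ℚ⟦x⟧` has zero constant term and satisfies `x = (27/4) t (1-t)²`, then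
`t = ∑_{k ≥ 1} (1/k) C(3k-2, k-1) 2^{2k}/3^{3k} x^k`, i.e. the coefficients of `t` are as stated. -/
theorem series_for_t (t : PowerSeries ℚ)
    (h0 : PowerSeries.constantCoeff t = 0)
    (ht : PowerSeries.C (27 / 4 : ℚ) * t * (1 - t) ^ 2 = PowerSeries.X) :
    t = PowerSeries.mk (fun k =>
      if 1 ≤ k then
        (1 / (k : ℚ)) * (Nat.choose (3 * k - 2) (k - 1) : ℚ) * 2 ^ (2 * k) / 3 ^ (3 * k)
      else 0) := by
  set s := d⁄dX ℚ t with hs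
  set e := d⁄dX ℚ s with he
  -- scaled algebraic equation
  have ht' : (27 : ℚ⟦X⟧) * (t * (1 - t) ^ 2) = 4 * X := by
    have h4 : (4 : ℚ⟦X⟧) * C (27/4) = 27 := by
      rw [show (4 : ℚ⟦X⟧) = C 4 from (map_ofNat (C (R := ℚ)) 4).symm, ← map_mul,
        show (27 : ℚ⟦X⟧) = C 27 from (map_ofNat (C (R := ℚ)) 27).symm]
      norm_num
    calc (27 : ℚ⟦X⟧) * (t * (1-t)^2) = 4 * (C (27/4) * t * (1-t)^2) := by
          rw [← h4]; ring
      _ = 4 * X := by rw [ht]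
  -- first derivative
  have h2 : (27 : ℚ⟦X⟧) * ((1 - t) * (1 - 3 * t) * s) = 4 := by
    have := congrArg (d⁄dX ℚ) ht'
    simp only [Derivation.leibniz, Derivation.leibniz_pow, map_sub,
      Derivation.map_one_eq_zero, derivative_X, smul_eq_mul, nsmul_eq_mul,
      show ((27 : ℚ⟦X⟧) = ((27:ℕ) : ℚ⟦X⟧)) by norm_num,
      show ((4 : ℚ⟦X⟧) = ((4:ℕ) : ℚ⟦X⟧)) by norm_num,
      Derivation.map_natCast, ← hs] at this
    push_cast at this ⊢
    linear_combination this
  -- second derivative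
  have h3 : (27 : ℚ⟦X⟧) * ((1 - t) * (1 - 3 * t) * e + (6 * t - 4) * s ^ 2) = 0 := by
    have := congrArg (d⁄dX ℚ) h2
    simp only [Derivation.leibniz, Derivation.leibniz_pow, map_sub,
      Derivation.map_one_eq_zero, smul_eq_mul, nsmul_eq_mul,
      show ((27 : ℚ⟦X⟧) = ((27:ℕ) : ℚ⟦X⟧)) by norm_num,
      show ((4 : ℚ⟦X⟧) = ((4:ℕ) : ℚ⟦X⟧)) by norm_num,
      show ((3 : ℚ⟦X⟧) = ((3:ℕ) : ℚ⟦X⟧)) by norm_num,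
      Derivation.map_natCast, ← hs, ← he] at this
    push_cast at this ⊢
    linear_combination this
  -- elimination: the linear ODE
  have key : (729 : ℚ⟦X⟧) * ((1-t)*(1-3*t))^3 * (54*(X*e) + 27*s + 6*t)
      = (729 : ℚ⟦X⟧) * ((1-t)*(1-3*t))^3 * (54*(X*(X*e)) + 54*(X*s) + 4) := by
    linear_combination
      (594 - 4536*t + 11664*t^2 - 11664*t^3 + 4374*t^4 + 864*X - 1296*t*X) * ht'
      + (729 - 5832*t + 16038*t^2 - 17496*t^3 + 6561*t^4
          + X*(-594 + 10368*t - 32076*t^2 + 34992*t^3 - 13122*t^4)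
          + X^2*(-864 + 1296*t)
          + s*(X - X^2)*(5832 - 32076*t + 52488*t^2 - 26244*t^3)) * h2
      + ((X - X^2)*(1458 - 11664*t + 32076*t^2 - 34992*t^3 + 13122*t^4)) * h3
  have hne : (729 : ℚ⟦X⟧) * ((1-t)*(1-3*t))^3 ≠ 0 := by
    intro hz
    have := congrArg (constantCoeff) hz
    simp only [map_mul, map_pow, map_sub, map_one, map_ofNat, h0, constantCoeff_one] at this
    norm_num at this
  have hODE : (54*(X*e) + 27*s + 6*t : ℚ⟦X⟧) = 54*(X*(X*e)) + 54*(X*s) + 4 :=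
    mul_left_cancel₀ hne key
  -- coefficient recursion
  have hrec : ∀ n : ℕ, 27*((n:ℚ)+1)*(2*(n:ℚ)+1) * coeff (n+1) t
      = (54*(n:ℚ)^2 - 6) * coeff n t + (if n = 0 then 4 else 0) := by
    intro n
    have hODE' : C 54 * (X*e) + C 27 * s + C 6 * t
        = C 54 * (X*(X*e)) + C 54 * (X*s) + C 4 := by
      simpa only [map_ofNat] using hODE
    match n with
    | 0 =>
      have H := congrArg (coeff 0) hODE'
      simp only [map_add, coeff_C_mul, coeff_zero_X_mul, coeff_C, if_pos rfl,
        hs, coeff_derivative] at H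
      norm_num at H ⊢
      linear_combination H
    | 1 =>
      have H := congrArg (coeff 1) hODE'
      simp only [map_add, coeff_C_mul, coeff_succ_X_mul, coeff_zero_X_mul, coeff_C,
        hs, he, coeff_derivative] at H
      norm_num at H ⊢
      linear_combination H
    | (m+2) =>
      have H := congrArg (coeff (m+2)) hODE'
      simp only [map_add, coeff_C_mul, coeff_succ_X_mul, coeff_C,
        hs, he, coeff_derivative] at H
      have hm2 : (m+2 : ℕ) ≠ 0 := by omega
      simp only [if_neg hm2] at H ⊢
      push_cast at H ⊢
      linear_combination H
  -- conclude by induction on coefficients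
  ext n
  rw [coeff_mk]
  induction n with
  | zero => simpa using h0
  | succ n ih =>
    have hne' : (27*((n:ℚ)+1)*(2*(n:ℚ)+1)) ≠ 0 := by positivity
    apply mul_left_cancel₀ hne'
    rw [hrec n, ih]
    match n with
    | 0 => norm_num
    | (m+1) =>
      have hb := binom_step m
      have e1 : 3 * (m+1+1) - 2 = 3*m+4 := by omega
      have e2 : (m+1+1) - 1 = m+1 := by omega
      have e3 : 3 * (m+1) - 2 = 3*m+1 := by omega
      have e4 : (m+1) - 1 = m := by omega
      simp only [if_pos (by omega : 1 ≤ m+1+1), if_pos (by omega : 1 ≤ m+1),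
        if_neg (by omega : ¬ (m+1 = 0)), e1, e2, e3, e4]
      have hm1 : ((m:ℚ)+1) ≠ 0 := by positivity
      have hm2 : ((m:ℚ)+2) ≠ 0 := by positivity
      have h27 : ((3:ℚ)^(3*(m+1+1))) ≠ 0 := by positivity
      have p1 : (2:ℚ)^(2*(m+1+1)) = 2^(2*m)*16 := by
        rw [show 2*(m+1+1) = 2*m+4 by ring, pow_add]; norm_num
      have p2 : (3:ℚ)^(3*(m+1+1)) = 3^(3*m)*729 := by
        rw [show 3*(m+1+1) = 3*m+6 by ring, pow_add]; norm_num
      have p3 : (2:ℚ)^(2*(m+1)) = 2^(2*m)*4 := by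
        rw [show 2*(m+1) = 2*m+2 by ring, pow_add]; norm_num
      have p4 : (3:ℚ)^(3*(m+1)) = 3^(3*m)*27 := by
        rw [show 3*(m+1) = 3*m+3 by ring, pow_add]; norm_num
      have hA : (2:ℚ)^(2*m) ≠ 0 := by positivity
      have hB : (3:ℚ)^(3*m) ≠ 0 := by positivity
      push_cast
      rw [p1, p2, p3, p4]
      field_simp
      linear_combination (-5832*(2:ℚ)^(2*m)) * hb
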